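/- Let B be a nondegenerate skew-symmetric (symplectic) bilinear form on V = \u2102^{2n}, and let X be a nonzero nilpotent self-adjoint endomorphism of V (i.e., B(Xu,v) = B(u,Xv) for all u,v). Then in the Jordan type of X, every Jordan block size occurs with even multiplicity. -/

import Mathlib

open Module LinearMap

/-- A skew-symmetric bilinear form on a finite-dimensional complex vector space has
even rank: the codimension of its kernel is even. -/
lemma even_rank_of_skew {M : Type*} [AddCommGroup M] [Module ℂ M]
    [FiniteDimensional ℂ M] (φ : M →ₗ[ℂ] M →ₗ[ℂ] ℂ)
    (hskew : ∀ u v, φ u v = - φ v u) :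
    Even (Module.finrank ℂ M - Module.finrank ℂ (LinearMap.ker φ)) := by
  set W := LinearMap.ker φ with hW
  obtain ⟨U, hU⟩ := Submodule.exists_isCompl W
  have hdim : Module.finrank ℂ W + Module.finrank ℂ U = Module.finrank ℂ M :=
    Submodule.finrank_add_eq_of_isCompl hU
  have hgoal : Module.finrank ℂ M - Module.finrank ℂ W = Module.finrank ℂ U := by omega
  rw [hgoal]
  -- the restriction of φ to U is nondegenerate
  set ψ : LinearMap.BilinForm ℂ U := LinearMap.BilinForm.restrict φ U with hψ
  have hnd : ψ.Nondegenerate := by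
    refine LinearMap.BilinForm.Nondegenerate.ofSeparatingLeft ?_
    intro u hu
    have hmem : (u : M) ∈ W := by
      rw [hW, LinearMap.mem_ker]
      ext m
      have hm : m ∈ W ⊔ U := by rw [hU.sup_eq_top]; trivial
      obtain ⟨w, hw, u', hu', rfl⟩ := Submodule.mem_sup.mp hm
      have h1 : φ (u : M) w = 0 := by
        rw [hskew]
        have : φ w = 0 := hw
        simp [this]
      have h2 : φ (u : M) u' = 0 := hu ⟨u', hu'⟩
      simp [h1, h2]
    have : u = 0 := by
      have := hU.inf_eq_bot
      have hmem2 : (u : M) ∈ W ⊓ U := ⟨hmem, u.2⟩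
      rw [this] at hmem2
      exact Subtype.ext hmem2
    exact this
  -- pass to matrices
  have b := Module.finBasis ℂ U
  set d := Module.finrank ℂ U with hd
  set S := BilinForm.toMatrix b ψ with hS
  have hdet : S.det ≠ 0 := by
    have := LinearMap.BilinForm.Nondegenerate.toMatrix hnd b
    rwa [Matrix.nondegenerate_iff_det_ne_zero] at this
  have hskewS : S.transpose = -S := by
    ext i j
    simp only [Matrix.transpose_apply, Matrix.neg_apply, hS,
      BilinForm.toMatrix_apply]
    exact hskew _ _
  rcases Nat.even_or_odd d with h | h
  · exact h
  · exfalso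
    have h1 : S.det = (-1 : ℂ) ^ d * S.det := by
      conv_lhs => rw [← Matrix.det_transpose S, hskewS, Matrix.det_neg]
      simp [hd]
    rw [Odd.neg_one_pow h] at h1
    exact hdet (by linear_combination (1/2 : ℂ) * h1)

/-- For a nondegenerate skew-symmetric (symplectic) bilinear form `B` on
`ℂ^{2n}` and a nonzero nilpotent self-adjoint endomorphism `X`, every Jordan block size
occurs with even multiplicity.  The multiplicity of Jordan blocks of size `r+1` equals
`rank X^r - 2 rank X^{r+1} + rank X^{r+2}`, so this is even for all `r` if and only if
`rank X^r + rank X^{r+2}` is even for all `r`. -/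
theorem stmt1 (n : ℕ)
    (B : (Fin (2*n) → ℂ) →ₗ[ℂ] (Fin (2*n) → ℂ) →ₗ[ℂ] ℂ)
    (hskew : ∀ u v, B u v = - B v u)
    (hB : ∀ u, (∀ v, B u v = 0) → u = 0)
    (X : Module.End ℂ (Fin (2*n) → ℂ))
    (hX : X ≠ 0) (hnil : IsNilpotent X)
    (hsa : ∀ u v, B (X u) v = B u (X v)) :
    ∀ r : ℕ, Even (Module.finrank ℂ (LinearMap.range (X ^ r)) +
        Module.finrank ℂ (LinearMap.range (X ^ (r + 2)))) := by
  -- self-adjointness of all powers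
  have hsak : ∀ k : ℕ, ∀ u v, B ((X ^ k) u) v = B u ((X ^ k) v) := by
    intro k
    induction k with
    | zero => intro u v; simp
    | succ m ih =>
      intro u v
      rw [pow_succ]
      simp only [Module.End.mul_apply]
      rw [ih, hsa]
      simp only [← Module.End.mul_apply, ← pow_succ', ← pow_succ]
  -- rank of each power is even
  have key : ∀ k : ℕ, Even (Module.finrank ℂ (LinearMap.range (X ^ k))) := by
    intro k
    set φ : (Fin (2*n) → ℂ) →ₗ[ℂ] (Fin (2*n) → ℂ) →ₗ[ℂ] ℂ := B ∘ₗ (X ^ k) with hφ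
    have hφskew : ∀ u v, φ u v = - φ v u := by
      intro u v
      simp only [hφ, LinearMap.comp_apply]
      rw [hsak, hskew]
    have hker : LinearMap.ker φ = LinearMap.ker (X ^ k) := by
      ext u
      simp only [LinearMap.mem_ker, hφ, LinearMap.comp_apply]
      constructor
      · intro h
        exact hB _ (fun v => by rw [h]; simp)
      · intro h; rw [h]; simp
    have hrn : Module.finrank ℂ (LinearMap.range (X ^ k)) +
        Module.finrank ℂ (LinearMap.ker (X ^ k)) = 2 * n := by
      have := LinearMap.finrank_range_add_finrank_ker (X ^ k)
      simpa using this
    have heven := even_rank_of_skew φ hφskew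
    rw [hker] at heven
    have hdimV : Module.finrank ℂ (Fin (2*n) → ℂ) = 2 * n := by simp
    rw [hdimV] at heven
    have hle : Module.finrank ℂ (LinearMap.ker (X ^ k)) ≤ 2 * n := by omega
    have : Module.finrank ℂ (LinearMap.range (X ^ k)) =
        2 * n - Module.finrank ℂ (LinearMap.ker (X ^ k)) := by omega
    rw [this]
    exact heven
  intro r
  exact (key r).add (key (r + 2))
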